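/- arXiv:1401.4264 — 2 statements merged into one kernel-verified Lean document; each statement's English description precedes it below -/
import Mathlib

section
/- Let Ū(t) be the average potential of the N-neuron system and K(t) the number of fires up to time t by neurons whose pre-fire potential is ≤ 2, N(t) the total number of fires. If Ū(t) = Ū(0) + (1/N)∑_i ∫_0^t ((N-1)/N - U_i(s-)) dN_i(s) with Ū(t) ≥ 0 and 0 ≤ U_i(s) for all i,s, then: (a) Ū(t) ≤ Ū(0) + K(t)/N; (b) N(t)/N ≤ Ū(0) + 2 K(t)/N. -/
open scoped Classical

/-- bounds on the average potential and the total number of fires in terms of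
the number `K` of fires from neurons with pre-fire potential `≤ 2`. The fire events are
indexed by the finite set `E`, with `u e` the pre-fire potential of the firing neuron at
event `e`; the dynamics of the average is `Ū(t) = Ū(0) + (1/N)∑_e ((N-1)/N - u e)`. -/
theorem stmt_4 (N : ℕ) (hN : 1 ≤ N) {ι : Type*} (E : Finset ι) (u : ι → ℝ)
    (hu : ∀ e ∈ E, 0 ≤ u e)
    (Ubar0 Ubart : ℝ) (h0 : 0 ≤ Ubar0) (ht : 0 ≤ Ubart)
    (hdyn : Ubart = Ubar0 + (1 / N) * ∑ e ∈ E, (((N : ℝ) - 1) / N - u e)) :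
    Ubart ≤ Ubar0 + ((E.filter (fun e => u e ≤ 2)).card : ℝ) / N ∧
    (E.card : ℝ) / N ≤ Ubar0 + 2 * ((E.filter (fun e => u e ≤ 2)).card : ℝ) / N := by
  have hNpos : (0:ℝ) < N := by exact_mod_cast hN
  have hfrac : ((N:ℝ)-1)/N ≤ 1 := by
    rw [div_le_one hNpos]; linarith
  have hfrac0 : 0 ≤ ((N:ℝ)-1)/N := by
    apply div_nonneg _ hNpos.le
    have : (1:ℝ) ≤ N := by exact_mod_cast hN
    linarith
  have hboole : ∑ e ∈ E, (if u e ≤ 2 then (1:ℝ) else 0)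
      = ((E.filter (fun e => u e ≤ 2)).card : ℝ) := by
    rw [Finset.sum_boole]
  constructor
  · have hsum : ∑ e ∈ E, (((N:ℝ)-1)/N - u e)
        ≤ ((E.filter (fun e => u e ≤ 2)).card : ℝ) := by
      rw [← hboole]
      apply Finset.sum_le_sum
      intro e he
      by_cases h : u e ≤ 2
      · simp only [h, if_true]; linarith [hu e he]
      · simp only [h, if_false]; push_neg at h; linarith
    rw [hdyn]
    have h1 : (1/(N:ℝ)) * ∑ e ∈ E, (((N:ℝ)-1)/N - u e)
        ≤ (1/(N:ℝ)) * ((E.filter (fun e => u e ≤ 2)).card : ℝ) := by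
      apply mul_le_mul_of_nonneg_left hsum
      positivity
    have heq : (1/(N:ℝ)) * ((E.filter (fun e => u e ≤ 2)).card : ℝ)
        = ((E.filter (fun e => u e ≤ 2)).card : ℝ) / N := by ring
    linarith [heq ▸ h1]
  · have hsum : ∑ e ∈ E, (((N:ℝ)-1)/N - u e)
        ≤ 2 * ((E.filter (fun e => u e ≤ 2)).card : ℝ) - (E.card : ℝ) := by
      have h1 : ∑ e ∈ E, (((N:ℝ)-1)/N - u e)
          ≤ ∑ e ∈ E, ((if u e ≤ 2 then (2:ℝ) else 0) - 1) := by
        apply Finset.sum_le_sum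
        intro e he
        by_cases h : u e ≤ 2
        · simp only [h, if_true]; linarith [hu e he]
        · simp only [h, if_false]; push_neg at h; linarith
      have h2 : ∑ e ∈ E, ((if u e ≤ 2 then (2:ℝ) else 0) - 1)
          = 2 * ((E.filter (fun e => u e ≤ 2)).card : ℝ) - (E.card : ℝ) := by
        rw [Finset.sum_sub_distrib, ← hboole]
        rw [Finset.mul_sum]
        simp [mul_ite]
      linarith [h2 ▸ h1]
    have hU : 0 ≤ Ubar0 + (1/(N:ℝ)) * (2 * ((E.filter (fun e => u e ≤ 2)).card : ℝ) - (E.card : ℝ)) := by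
      have h3 := mul_le_mul_of_nonneg_left hsum (by positivity : (0:ℝ) ≤ 1/(N:ℝ))
      rw [hdyn] at ht
      linarith
    rw [div_le_iff₀ hNpos]
    have hexpand : (Ubar0 + 2 * ((E.filter (fun e => u e ≤ 2)).card : ℝ) / N) * N
        = Ubar0 * N + 2 * ((E.filter (fun e => u e ≤ 2)).card : ℝ) := by
      field_simp
    rw [hexpand]
    have h4 := mul_le_mul_of_nonneg_left hU hNpos.le
    have hN1 : (N:ℝ) * ((1:ℝ)/N) = 1 := by field_simp
    nlinarith [hU, hNpos]
end

section
/- (Conservation of mass at the boundary.) Suppose ρ_t(x) is a classical solution of ∂_t ρ_t + ∂_x(V(x,ρ_t)ρ_t) = -f ρ_t on (0,∞)×(0,T), with V(x,ρ_t) = -λ(x - ρ̄_t) + p_t, p_t = ∫_0^∞ f ρ_t dx, ρ̄_t = ∫_0^∞ x ρ_t dx, ρ_t having compact support and ∫_0^∞ ρ_t(x)dx = 1 for all t. Then the boundary value satisfies V(0,ρ_t) ρ_t(0) = p_t, i.e., ρ_t(0) = p_t/(p_t + λ ρ̄_t). -/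
open Real MeasureTheory

/-- Cutoff lemma: a continuous function vanishing on `[R, ∞)` has the same integral on
`Ioi 0` as on `Ioc 0 (R+1)`. -/
lemma cutoff_integral_aux (h : ℝ → ℝ) (hc : Continuous h) (R : ℝ) (hR : 0 < R)
    (hz : ∀ x, R ≤ x → h x = 0) :
    ∫ x in Set.Ioi (0:ℝ), h x = ∫ x in Set.Ioc (0:ℝ) (R+1), h x := by
  have hun : Set.Ioc (0:ℝ) (R+1) ∪ Set.Ioi (R+1) = Set.Ioi (0:ℝ) :=
    Set.Ioc_union_Ioi_eq_Ioi (by linarith)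
  have h2 : IntegrableOn h (Set.Ioi (R+1)) := by
    rw [integrableOn_congr_fun (g := fun _ => (0:ℝ))
      (fun x hx => hz x (by simpa using le_of_lt (by linarith [Set.mem_Ioi.mp hx])))
      measurableSet_Ioi]
    exact integrableOn_zero
  have h1 : IntegrableOn h (Set.Ioc (0:ℝ) (R+1)) :=
    hc.integrableOn_Ioc
  have hz2 : ∫ x in Set.Ioi (R+1), h x = 0 := by
    rw [setIntegral_congr_fun measurableSet_Ioi
      (fun x hx => hz x (le_of_lt (by linarith [Set.mem_Ioi.mp hx])))]
    exact integral_zero _ _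
  rw [← hun, setIntegral_union Set.Ioc_disjoint_Ioi_same measurableSet_Ioi h1 h2, hz2, add_zero]

/-- conservation of mass at the boundary. If `ρ_t(x)` is a classical solution
of `∂_t ρ + ∂_x(V(x,ρ_t) ρ) = -f ρ` on `(0,T)×(0,∞)` with `V(x,ρ_t) = -λ(x-ρ̄_t) + p_t`,
`p_t = ∫ f ρ_t`, `ρ̄_t = ∫ x ρ_t`, compact support in `x` and total mass `1` at all times,
then `V(0,ρ_t) ρ_t(0) = p_t`, i.e. `ρ_t(0) = p_t/(p_t + λ ρ̄_t)`. -/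
theorem stmt_18 (lam T fstar : ℝ) (hlam : 0 ≤ lam) (hT : 0 < T)
    (f : ℝ → ℝ) (hf : Continuous f) (hfnn : ∀ x, 0 ≤ f x) (hfb : ∀ x, f x ≤ fstar)
    (ρ : ℝ → ℝ → ℝ) (hρnn : ∀ t x, 0 ≤ ρ t x)
    (hρcont : Continuous (Function.uncurry ρ))
    (R : ℝ) (hR : 0 < R) (hsupp : ∀ t x, R ≤ x → ρ t x = 0)
    (p ρbar : ℝ → ℝ)
    (hp : ∀ t, p t = ∫ x in Set.Ioi (0:ℝ), f x * ρ t x)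
    (hρbar : ∀ t, ρbar t = ∫ x in Set.Ioi (0:ℝ), x * ρ t x)
    (V : ℝ → ℝ → ℝ) (hV : ∀ t x, V t x = -(lam * (x - ρbar t)) + p t)
    (hmass : ∀ t ∈ Set.Icc (0:ℝ) T, ∫ x in Set.Ioi (0:ℝ), ρ t x = 1)
    (Dt Dx : ℝ → ℝ → ℝ)
    (hDt : ∀ t ∈ Set.Ioo (0:ℝ) T, ∀ x : ℝ, 0 < x →
      HasDerivAt (fun τ => ρ τ x) (Dt t x) t)
    (hDx : ∀ t ∈ Set.Ioo (0:ℝ) T, ∀ x : ℝ, 0 < x →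
      HasDerivAt (fun y => V t y * ρ t y) (Dx t x) x)
    (hDtcont : Continuous (Function.uncurry Dt))
    (hDxcont : Continuous (Function.uncurry Dx))
    (hpde : ∀ t ∈ Set.Ioo (0:ℝ) T, ∀ x : ℝ, 0 < x →
      Dt t x + Dx t x = -(f x * ρ t x))
    (hpos : ∀ t ∈ Set.Ioo (0:ℝ) T, 0 < p t + lam * ρbar t) :
    ∀ t ∈ Set.Ioo (0:ℝ) T,
      V t 0 * ρ t 0 = p t ∧ ρ t 0 = p t / (p t + lam * ρbar t) := by
  intro t ht
  obtain ⟨ht0, htT⟩ := ht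
  -- continuity of slices
  have hρt : ∀ s : ℝ, Continuous (fun x => ρ s x) := fun s =>
    hρcont.comp (Continuous.prodMk_right s)
  have hDxt : Continuous (fun x => Dx t x) := hDxcont.comp (Continuous.prodMk_right t)
  have hDtt : Continuous (fun x => Dt t x) := hDtcont.comp (Continuous.prodMk_right t)
  have hVt : Continuous (fun x => V t x) := by
    have : (fun x => V t x) = fun x => -(lam * (x - ρbar t)) + p t := funext fun x => hV t x
    rw [this]; continuity
  -- Step 1: FTC for Dx on [0, R+1]
  have hg : Continuous (fun y => V t y * ρ t y) := hVt.mul (hρt t)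
  have hftc : ∫ y in (0:ℝ)..(R+1), Dx t y =
      V t (R+1) * ρ t (R+1) - V t 0 * ρ t 0 := by
    apply intervalIntegral.integral_eq_sub_of_hasDerivAt_of_le (by linarith)
      hg.continuousOn
      (fun x hx => hDx t ⟨ht0, htT⟩ x hx.1)
      (hDxt.intervalIntegrable _ _)
  have hρR1 : ρ t (R+1) = 0 := hsupp t (R+1) (by linarith)
  have hDxint : ∫ x in Set.Ioc (0:ℝ) (R+1), Dx t x = -(V t 0 * ρ t 0) := by
    rw [← intervalIntegral.integral_of_le (by linarith : (0:ℝ) ≤ R+1), hftc, hρR1]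
    ring
  -- Step 2: differentiate the mass under the integral sign
  set ε : ℝ := min t (T - t) with hε
  have hεpos : 0 < ε := lt_min ht0 (by linarith)
  have hball : Metric.ball t ε ⊆ Set.Ioo 0 T := by
    intro τ hτ
    rw [Metric.mem_ball, Real.dist_eq, abs_lt] at hτ
    constructor
    · have := hτ.1; have : -(min t (T - t)) < τ - t := this; have h' := min_le_left t (T - t)
      linarith
    · have := hτ.2; have h' := min_le_right t (T - t); linarith
  -- bound for Dt on a compact set
  obtain ⟨M, hM⟩ := (IsCompact.prod (isCompact_Icc (a := t - ε) (b := t + ε))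
    (isCompact_Icc (a := (0:ℝ)) (b := R+1))).exists_bound_of_continuousOn
    hDtcont.continuousOn
  have key := hasDerivAt_integral_of_dominated_loc_of_deriv_le (μ := volume.restrict (Set.Ioc (0:ℝ) (R+1)))
      (F := fun τ x => ρ τ x) (F' := fun τ x => Dt τ x) (bound := fun _ => M)
      (x₀ := t) (s := Metric.ball t ε) (Metric.ball_mem_nhds t hεpos)
      (Filter.Eventually.of_forall fun τ => ((hρt τ).aestronglyMeasurable))
      ((hρt t).integrableOn_Ioc)
      (hDtt.aestronglyMeasurable)
      ?_ ?_ ?_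
  · -- key : Integrable ... ∧ HasDerivAt (fun τ => ∫ x in Ioc, ρ τ x) (∫ x in Ioc, Dt t x) t
    have hconst : ∀ᶠ τ in nhds t, (fun τ => ∫ x in Set.Ioc (0:ℝ) (R+1), ρ τ x) τ = 1 := by
      filter_upwards [isOpen_Ioo.mem_nhds (⟨ht0, htT⟩ : t ∈ Set.Ioo 0 T)] with τ hτ
      rw [← cutoff_integral_aux (fun x => ρ τ x) (hρt τ) R hR (fun x hx => hsupp τ x hx)]
      exact hmass τ ⟨le_of_lt hτ.1, le_of_lt hτ.2⟩
    have hzero : HasDerivAt (fun τ => ∫ x in Set.Ioc (0:ℝ) (R+1), ρ τ x) 0 t := by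
      have h1 : HasDerivAt (fun _ : ℝ => (1:ℝ)) 0 t := hasDerivAt_const t 1
      exact h1.congr_of_eventuallyEq hconst
    have hDtint : ∫ x in Set.Ioc (0:ℝ) (R+1), Dt t x = 0 :=
      key.2.unique hzero
    -- Step 3: integrate the PDE
    have hIDt : IntegrableOn (fun x => Dt t x) (Set.Ioc (0:ℝ) (R+1)) :=
      hDtt.integrableOn_Ioc
    have hIDx : IntegrableOn (fun x => Dx t x) (Set.Ioc (0:ℝ) (R+1)) :=
      hDxt.integrableOn_Ioc
    have hsum : ∫ x in Set.Ioc (0:ℝ) (R+1), (Dt t x + Dx t x) =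
        ∫ x in Set.Ioc (0:ℝ) (R+1), -(f x * ρ t x) :=
      setIntegral_congr_fun measurableSet_Ioc (fun x hx => hpde t ⟨ht0, htT⟩ x hx.1)
    rw [integral_add hIDt hIDx, hDtint, hDxint, integral_neg, zero_add] at hsum
    have hfρ : ∫ x in Set.Ioc (0:ℝ) (R+1), f x * ρ t x = p t := by
      rw [hp t, cutoff_integral_aux (fun x => f x * ρ t x) (hf.mul (hρt t)) R hR
        (fun x hx => by simp [hsupp t x hx])]
    rw [hfρ] at hsum
    have hmain : V t 0 * ρ t 0 = p t := by linarith
    refine ⟨hmain, ?_⟩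
    have hV0 : V t 0 = p t + lam * ρbar t := by rw [hV t 0]; ring
    have hpos' := hpos t ⟨ht0, htT⟩
    rw [hV0] at hmain
    field_simp
    linarith
  · -- bound
    rw [ae_restrict_iff' measurableSet_Ioc]
    refine Filter.Eventually.of_forall fun x hx => fun τ hτ => ?_
    refine hM (τ, x) ⟨?_, ⟨le_of_lt hx.1, hx.2⟩⟩
    rw [Metric.mem_ball, Real.dist_eq, abs_lt] at hτ
    exact ⟨by linarith [hτ.1], by linarith [hτ.2]⟩
  · exact integrableOn_const measure_Ioc_lt_top.ne
  · rw [ae_restrict_iff' measurableSet_Ioc]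
    exact Filter.Eventually.of_forall fun x hx => fun τ hτ =>
      hDt τ (hball hτ) x hx.1
end
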